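/- arXiv:1611.08290 — 2 statements merged into one kernel-verified Lean document; each statement's English description precedes it below -/
import Mathlib

section
/- There exist a family (A_k)_{k ∈ ℕ} of pairwise disjoint infinite subsets of ℕ and a function h : ℕ → ℕ that maps ⋃_k A_k into ⋃_k A_k and is injective on ⋃_k A_k, such that: (1) for every finite subset F of A_{2k+2} there is a finite subset E of A_{2k} with h[A_{2k} \ E] ⊆ A_{2k+2} \ F; (2) for every finite subset F of A_{2k+1} there is a finite subset E of A_{2k+3} with h[A_{2k+3} \ E] ⊆ A_{2k+1} \ F; (3) for every finite subset E of A₀ there is a finite subset H of A₁ with h[A₁ \ H] ⊆ A₀ \ E; and (4) there exists x₀ ∈ A₀ whose orbit under h, namely {hⁿ(x₀) : n ∈ ℕ}, equals ⋃_k A_k. -/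
private def blk (n : ℕ) : ℕ := Nat.findGreatest (fun m => m * (m + 1) ≤ n) n

private def c (n : ℕ) : ℕ :=
  if n - blk n * (blk n + 1) ≤ blk n then 2 * (n - blk n * (blk n + 1))
  else 4 * blk n + 3 - 2 * (n - blk n * (blk n + 1))

private lemma blk_le (n : ℕ) : blk n * (blk n + 1) ≤ n := by
  have h := Nat.findGreatest_spec (P := fun m' => m' * (m' + 1) ≤ n) (m := 0) (n := n)
    (Nat.zero_le _) (by simp)
  simpa [blk] using h

private lemma blk_lt (n : ℕ) : n < (blk n + 1) * (blk n + 2) := by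
  by_contra hc
  push_neg at hc
  have h : blk n + 1 ≤ blk n :=
    Nat.le_findGreatest (P := fun m' => m' * (m' + 1) ≤ n) (by nlinarith) (by simpa using hc)
  omega

private lemma blk_eq (m i : ℕ) (hi : i ≤ 2 * m + 1) : blk (m * (m + 1) + i) = m := by
  have h1 : m ≤ blk (m * (m + 1) + i) :=
    Nat.le_findGreatest (P := fun m' => m' * (m' + 1) ≤ m * (m + 1) + i) (by nlinarith) (by omega)
  have h2 := blk_lt (m * (m + 1) + i)
  have h3 := blk_le (m * (m + 1) + i)
  set B := blk (m * (m + 1) + i) with hB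
  by_contra hc
  have hc' : m + 1 ≤ B := by omega
  have : (m + 1) * (m + 2) ≤ B * (B + 1) := Nat.mul_le_mul hc' (by omega)
  nlinarith

private lemma c_eq (m i : ℕ) (hi : i ≤ 2 * m + 1) :
    c (m * (m + 1) + i) = if i ≤ m then 2 * i else 4 * m + 3 - 2 * i := by
  unfold c
  rw [blk_eq m i hi, Nat.add_sub_cancel_left]

private lemma decomp (n : ℕ) : ∃ m i, i ≤ 2 * m + 1 ∧ n = m * (m + 1) + i := by
  have hp := blk_le n
  have h2 := blk_lt n
  have hx : (blk n + 1) * (blk n + 2) = blk n * (blk n + 1) + 2 * blk n + 2 := by ring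
  exact ⟨blk n, n - blk n * (blk n + 1), by omega, by omega⟩

private lemma c_mem_self (n : ℕ) : c n = c n := rfl

private lemma c_succ_even (k n : ℕ) (h : c n = 2 * k) (hne : n ≠ k * (k + 1) + k) :
    c (n + 1) = 2 * k + 2 := by
  obtain ⟨m, i, hi, rfl⟩ := decomp n
  rw [c_eq m i hi] at h
  by_cases hle : i ≤ m
  · rw [if_pos hle] at h
    have hik : i = k := by omega
    have him : i < m := by
      rcases Nat.lt_or_ge i m with h' | h'
      · exact h'
      · exfalso; apply hne; have : i = m := by omega
        subst hik this; ring
    have : m * (m + 1) + i + 1 = m * (m + 1) + (i + 1) := by ring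
    rw [this, c_eq m (i + 1) (by omega), if_pos (by omega)]
    omega
  · rw [if_neg hle] at h
    omega

private lemma c_succ_odd (k n : ℕ) (h : c n = 2 * k + 3) : c (n + 1) = 2 * k + 1 := by
  obtain ⟨m, i, hi, rfl⟩ := decomp n
  rw [c_eq m i hi] at h
  by_cases hle : i ≤ m
  · rw [if_pos hle] at h; omega
  · rw [if_neg hle] at h
    have hi2 : i + 1 ≤ 2 * m + 1 := by omega
    have : m * (m + 1) + i + 1 = m * (m + 1) + (i + 1) := by ring
    rw [this, c_eq m (i + 1) hi2, if_neg (by omega)]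
    omega

private lemma c_succ_one (n : ℕ) (h : c n = 1) : c (n + 1) = 0 := by
  obtain ⟨m, i, hi, rfl⟩ := decomp n
  rw [c_eq m i hi] at h
  by_cases hle : i ≤ m
  · rw [if_pos hle] at h; omega
  · rw [if_neg hle] at h
    have hi1 : i = 2 * m + 1 := by omega
    have : m * (m + 1) + i + 1 = (m + 1) * ((m + 1) + 1) + 0 := by subst hi1; ring
    rw [this, c_eq (m + 1) 0 (by omega), if_pos (by omega)]

private lemma c_even_mem (j m : ℕ) (h : j ≤ m) : c (m * (m + 1) + j) = 2 * j := by
  rw [c_eq m j (by omega), if_pos h]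

private lemma c_odd_mem (j m : ℕ) (h : j ≤ m) : c (m * (m + 1) + (2 * m + 1 - j)) = 2 * j + 1 := by
  rw [c_eq m (2 * m + 1 - j) (by omega), if_neg (by omega)]
  omega

/-- Lemma 4.1: There are a family `(A k)` of pairwise disjoint infinite subsets of `ℕ`
and a function `h : ℕ → ℕ` mapping `⋃ k, A k` into itself, injective on `⋃ k, A k`,
satisfying the almost-mapping conditions (1)–(3) and having a point `x₀ ∈ A 0` whose
orbit under `h` is exactly `⋃ k, A k`. -/
theorem exists_disjoint_family_and_map :
    ∃ (A : ℕ → Set ℕ) (h : ℕ → ℕ),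
      Pairwise (Function.onFun Disjoint A) ∧
      (∀ k, (A k).Infinite) ∧
      Set.MapsTo h (⋃ k, A k) (⋃ k, A k) ∧
      Set.InjOn h (⋃ k, A k) ∧
      (∀ k : ℕ, ∀ F ⊆ A (2 * k + 2), F.Finite →
        ∃ E ⊆ A (2 * k), E.Finite ∧ h '' (A (2 * k) \ E) ⊆ A (2 * k + 2) \ F) ∧
      (∀ k : ℕ, ∀ F ⊆ A (2 * k + 1), F.Finite →
        ∃ E ⊆ A (2 * k + 3), E.Finite ∧ h '' (A (2 * k + 3) \ E) ⊆ A (2 * k + 1) \ F) ∧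
      (∀ E ⊆ A 0, E.Finite →
        ∃ H ⊆ A 1, H.Finite ∧ h '' (A 1 \ H) ⊆ A 0 \ E) ∧
      (∃ x₀ ∈ A 0, (Set.range fun n : ℕ => h^[n] x₀) = ⋃ k, A k) := by
  refine ⟨fun k => {n | c n = k}, fun n => n + 1, ?_, ?_, ?_, ?_, ?_, ?_, ?_, ?_⟩
  · intro j k hjk
    simp only [Function.onFun, Set.disjoint_left]
    intro n hn hn'
    exact hjk (hn.symm.trans hn')
  · intro k
    apply Set.infinite_of_not_bddAbove
    rintro ⟨b, hb⟩
    rcases Nat.even_or_odd k with ⟨j, hj⟩ | ⟨j, hj⟩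
    · have hmem : (b + j + 1) * (b + j + 1 + 1) + j ∈ {n | c n = k} := by
        simp only [Set.mem_setOf_eq, hj]
        rw [c_even_mem j (b + j + 1) (by omega)]; ring
      have := hb hmem
      nlinarith
    · have hmem : (b + j + 1) * (b + j + 1 + 1) + (2 * (b + j + 1) + 1 - j) ∈ {n | c n = k} := by
        simp only [Set.mem_setOf_eq, hj]
        rw [c_odd_mem j (b + j + 1) (by omega)]
      have := hb hmem
      nlinarith
  · intro n _
    exact Set.mem_iUnion.2 ⟨c (n + 1), rfl⟩
  · intro a _ b _ hab
    exact Nat.succ_injective hab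
  · intro k F hF hFfin
    refine ⟨{n | c n = 2 * k} ∩ ({k * (k + 1) + k} ∪ (fun n => n + 1) ⁻¹' F), fun n hn => hn.1,
      Set.Finite.inter_of_right (Set.Finite.union (Set.finite_singleton _)
        (Set.Finite.preimage (Set.injOn_of_injective (fun a b => by omega)) hFfin)) _, ?_⟩
    rintro x ⟨n, ⟨hn, hnE⟩, rfl⟩
    have hne : n ≠ k * (k + 1) + k := by
      intro h; exact hnE ⟨hn, Or.inl h⟩
    have hnF : n + 1 ∉ F := by
      intro h; exact hnE ⟨hn, Or.inr h⟩
    exact ⟨c_succ_even k n hn hne, hnF⟩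
  · intro k F hF hFfin
    refine ⟨{n | c n = 2 * k + 3} ∩ (fun n => n + 1) ⁻¹' F, fun n hn => hn.1,
      Set.Finite.inter_of_right
        (Set.Finite.preimage (Set.injOn_of_injective (fun a b => by omega)) hFfin) _, ?_⟩
    rintro x ⟨n, ⟨hn, hnE⟩, rfl⟩
    exact ⟨c_succ_odd k n hn, fun h => hnE ⟨hn, h⟩⟩
  · intro E hE hEfin
    refine ⟨{n | c n = 1} ∩ (fun n => n + 1) ⁻¹' E, fun n hn => hn.1,
      Set.Finite.inter_of_right
        (Set.Finite.preimage (Set.injOn_of_injective (fun a b => by omega)) hEfin) _, ?_⟩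
    rintro x ⟨n, ⟨hn, hnE⟩, rfl⟩
    exact ⟨c_succ_one n hn, fun h => hnE ⟨hn, h⟩⟩
  · refine ⟨0, ?_, ?_⟩
    · show c 0 = 0
      have := c_even_mem 0 0 le_rfl
      simpa using this
    · have hiter : ∀ n : ℕ, (fun m => m + 1)^[n] 0 = n := by
        intro n
        induction n with
        | zero => rfl
        | succ n ih => rw [Function.iterate_succ_apply', ih]
      ext x
      constructor
      · intro _; exact Set.mem_iUnion.2 ⟨c x, rfl⟩
      · intro _; exact ⟨x, hiter x⟩
end

section
/- There exists a continuous function f : (ω³ + 1) → (ω³ + 1), where ω³ + 1 is realized as Iic(ω³) with the subspace topology from the order topology on ordinals, such that some point w has dense orbit under f, and for every free ultrafilter p on ℕ the p-iterate f^p is discontinuous; that is, for every free ultrafilter p on ℕ and every function g : ω³+1 → ω³+1 satisfying that for each x the sequence (fⁿ(x)) converges to g(x) along p, the function g is not continuous. -/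
open Filter Set

namespace Ex44

abbrev L : Type := ℕ ×ₗ (ℕ ×ₗ ℕ)
abbrev Y : Type := WithTop L

def mk (a b c : ℕ) : Y := ((toLex (a, toLex (b, c)) : L) : Y)

theorem mk_lt_mk {a b c a' b' c' : ℕ} :
    mk a b c < mk a' b' c' ↔ a < a' ∨ (a = a' ∧ (b < b' ∨ (b = b' ∧ c < c'))) := by
  simp only [mk, WithTop.coe_lt_coe, Prod.Lex.lt_iff, ofLex_toLex]

theorem mk_le_mk {a b c a' b' c' : ℕ} :
    mk a b c ≤ mk a' b' c' ↔ a < a' ∨ (a = a' ∧ (b < b' ∨ (b = b' ∧ c ≤ c'))) := by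
  simp only [mk, WithTop.coe_le_coe, Prod.Lex.le_iff, Prod.Lex.lt_iff, ofLex_toLex]

theorem mk_lt_top (a b c : ℕ) : mk a b c < ⊤ := WithTop.coe_lt_top _

theorem mk_injective {a b c a' b' c' : ℕ} (h : mk a b c = mk a' b' c') :
    a = a' ∧ b = b' ∧ c = c' := by
  have h1 : (toLex (a, toLex (b, c)) : L) = toLex (a', toLex (b', c')) := by
    exact WithTop.coe_injective h
  have h2 := congrArg ofLex h1
  simp only [ofLex_toLex, Prod.mk.injEq] at h2
  obtain ⟨ha, h3⟩ := h2
  have h4 := congrArg ofLex h3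
  simp only [ofLex_toLex, Prod.mk.injEq] at h4
  exact ⟨ha, h4.1, h4.2⟩

/-- `nextE` : successor in the lexicographic enumeration of entry pairs
`E = {(A,B) : 1 ≤ A, B ≤ A}`. -/
def nextE : ℕ × ℕ → ℕ × ℕ := fun e => if e.2 < e.1 then (e.1, e.2 + 1) else (e.1 + 1, 0)

/-- `t A B` : the level at which the chain started at entry `(A,B)` hits fiber `(0,0)`. -/
def t (A B : ℕ) : ℕ := if B = 0 then 2 * A - 1 else 2 ^ B * (2 * (A - B) + 1)

/-- the inverse of `t`. -/
def tInv : ℕ → ℕ × ℕ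
  | 0 => (0, 0)
  | (n + 1) =>
    if (n + 1) % 2 = 1 then ((n + 2) / 2, 0)
    else
      let e := tInv ((n + 1) / 2)
      if e.2 = 0 then (e.1, 1) else (e.1 + 1, e.2 + 1)
decreasing_by exact Nat.div_lt_self (Nat.succ_pos n) (by norm_num)

/-- the jump map from fiber `(0,0)`. -/
def J (c : ℕ) : Y := mk (nextE (tInv c)).1 (nextE (tInv c)).2 1

/-- The dynamical system on `Y`. -/
def fY : Y → Y := fun y =>
  match y with
  | ⊤ => ⊤
  | (l : L) =>
    let a := (ofLex l).1
    let b := (ofLex (ofLex l).2).1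
    let c := (ofLex (ofLex l).2).2
    if 2 ≤ a then
      if b < a ∧ c ≠ 0 then mk (a - 1) b (c + 1) else mk (a - 1) b c
    else if a = 1 then
      if c = 0 then (if b = 0 then mk 1 0 0 else mk 0 b 0)
      else mk 0 b (2 * c - 1)
    else
      if 1 ≤ b then
        if c = 0 then (if b = 1 then ⊤ else mk 0 (b - 1) 0)
        else mk 0 (b - 1) (2 * c)
      else
        if c = 0 then mk 1 0 1
        else J c

theorem fY_mk (a b c : ℕ) :
    fY (mk a b c) =
      if 2 ≤ a then
        if b < a ∧ c ≠ 0 then mk (a - 1) b (c + 1) else mk (a - 1) b c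
      else if a = 1 then
        if c = 0 then (if b = 0 then mk 1 0 0 else mk 0 b 0)
        else mk 0 b (2 * c - 1)
      else
        if 1 ≤ b then
          if c = 0 then (if b = 1 then ⊤ else mk 0 (b - 1) 0)
          else mk 0 (b - 1) (2 * c)
        else
          if c = 0 then mk 1 0 1
          else J c := by
  rfl

theorem fY_top : fY ⊤ = ⊤ := rfl

/-! ### step lemmas for `fY` -/

theorem step_shift {a b c : ℕ} (h2 : 2 ≤ a) (hb : b < a) (hc : c ≠ 0) :
    fY (mk a b c) = mk (a - 1) b (c + 1) := by
  rw [fY_mk]; simp [h2, hb, hc]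

theorem step_id {a b c : ℕ} (h2 : 2 ≤ a) (hb : a ≤ b) :
    fY (mk a b c) = mk (a - 1) b c := by
  rw [fY_mk]; simp [h2, Nat.not_lt.2 hb]

theorem step_limit2 {a b : ℕ} (h2 : 2 ≤ a) :
    fY (mk a b 0) = mk (a - 1) b 0 := by
  rw [fY_mk]; simp [h2]

theorem step_one {b c : ℕ} (hc : c ≠ 0) :
    fY (mk 1 b c) = mk 0 b (2 * c - 1) := by
  rw [fY_mk]; simp [hc]

theorem step_one_limit {b : ℕ} (hb : b ≠ 0) :
    fY (mk 1 b 0) = mk 0 b 0 := by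
  rw [fY_mk]; simp [hb]

theorem step_fixed : fY (mk 1 0 0) = mk 1 0 0 := by
  rw [fY_mk]; simp

theorem step_zero {b c : ℕ} (hb : 1 ≤ b) (hc : c ≠ 0) :
    fY (mk 0 b c) = mk 0 (b - 1) (2 * c) := by
  rw [fY_mk]; simp [hb, hc, Nat.not_lt.2 hb]

theorem step_zero_limit {b : ℕ} (hb : 2 ≤ b) :
    fY (mk 0 b 0) = mk 0 (b - 1) 0 := by
  rw [fY_mk]
  have : ¬ (2 ≤ 0) := by omega
  have hb1 : b ≠ 1 := by omega
  simp [this, hb1]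
  omega

theorem step_omega : fY (mk 0 1 0) = ⊤ := by
  rw [fY_mk]; simp

theorem step_start : fY (mk 0 0 0) = mk 1 0 1 := by
  rw [fY_mk]; simp

theorem step_J {c : ℕ} (hc : c ≠ 0) : fY (mk 0 0 c) = J c := by
  rw [fY_mk]; simp [hc]

/-! ### arithmetic of `t` and `tInv` -/

theorem tInv_odd {c : ℕ} (h : c % 2 = 1) : tInv c = ((c + 1) / 2, 0) := by
  obtain ⟨n, rfl⟩ : ∃ n, c = n + 1 := by
    rcases c with _ | n
    · omega
    · exact ⟨n, rfl⟩
  rw [tInv, if_pos h]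

theorem tInv_even {c : ℕ} (h1 : c ≠ 0) (h : c % 2 = 0) :
    tInv c = if (tInv (c / 2)).2 = 0 then ((tInv (c / 2)).1, 1)
             else ((tInv (c / 2)).1 + 1, (tInv (c / 2)).2 + 1) := by
  obtain ⟨n, rfl⟩ : ∃ n, c = n + 1 := by
    rcases c with _ | n
    · omega
    · exact ⟨n, rfl⟩
  rw [tInv, if_neg (by omega)]

theorem t_zero (A : ℕ) : t A 0 = 2 * A - 1 := by simp [t]

theorem t_succ (A B : ℕ) (hB : B ≠ 0) : t A B = 2 ^ B * (2 * (A - B) + 1) := by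
  simp [t, hB]

theorem t_pos {A B : ℕ} (hA : 1 ≤ A) : 1 ≤ t A B := by
  rcases Nat.eq_zero_or_pos B with h | h
  · subst h; rw [t_zero]; omega
  · rw [t_succ _ _ (by omega)]
    have : 1 ≤ 2 ^ B := Nat.one_le_two_pow
    nlinarith

theorem tInv_t {A B : ℕ} (hA : 1 ≤ A) (hBA : B ≤ A) : tInv (t A B) = (A, B) := by
  induction B generalizing A with
  | zero =>
    rw [t_zero, tInv_odd (by omega)]
    have : (2 * A - 1 + 1) / 2 = A := by omega
    rw [this]
  | succ B ih =>
    have hA1 : 1 ≤ A := hA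
    rcases Nat.eq_zero_or_pos B with hB0 | hBpos
    · subst hB0
      have ht : t A 1 = 2 * (2 * A - 1) := by
        rw [t_succ _ _ one_ne_zero]; ring_nf; omega
      have heven : t A 1 % 2 = 0 := by omega
      have hne : t A 1 ≠ 0 := by omega
      rw [tInv_even hne heven]
      have hdiv : t A 1 / 2 = t A 0 := by rw [ht, t_zero]; omega
      rw [hdiv, ih hA (by omega)]
      simp
    · have hBA' : B ≤ A - 1 := by omega
      have hA2 : 1 ≤ A - 1 := by omega
      have ht : t A (B + 1) = 2 * t (A - 1) B := by
        rw [t_succ _ _ (by omega), t_succ _ _ (by omega)]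
        have : A - (B + 1) = A - 1 - B := by omega
        rw [this]; ring
      have heven : t A (B + 1) % 2 = 0 := by omega
      have hne : t A (B + 1) ≠ 0 := by
        have := t_pos (A := A) (B := B + 1) hA; omega
      rw [tInv_even hne heven]
      have hdiv : t A (B + 1) / 2 = t (A - 1) B := by omega
      rw [hdiv, ih hA2 hBA']
      have hBne : B ≠ 0 := by omega
      simp only [hBne, if_false]
      have : A - 1 + 1 = A := by omega
      rw [this]

theorem t_tInv : ∀ c : ℕ, c ≠ 0 →
    1 ≤ (tInv c).1 ∧ (tInv c).2 ≤ (tInv c).1 ∧ t (tInv c).1 (tInv c).2 = c := by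
  intro c
  induction c using Nat.strong_induction_on with
  | _ c ih =>
    intro hc
    rcases Nat.even_or_odd c with he | ho
    · -- even
      have h2 : c % 2 = 0 := Nat.even_iff.1 he
      have hhalf : c / 2 ≠ 0 := by omega
      have hlt : c / 2 < c := Nat.div_lt_self (by omega) (by norm_num)
      obtain ⟨h1', h2', h3'⟩ := ih (c / 2) hlt hhalf
      rw [tInv_even hc h2]
      rcases Nat.eq_zero_or_pos (tInv (c / 2)).2 with hB | hB
      · rw [if_pos hB]
        refine ⟨h1', by omega, ?_⟩
        simp only
        rw [t_succ _ _ one_ne_zero]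
        rw [hB, t_zero] at h3'
        have h4 : (2:ℕ) ^ 1 = 2 := by norm_num
        rw [h4]
        omega
      · rw [if_neg (by omega)]
        refine ⟨by omega, by omega, ?_⟩
        simp only
        rw [t_succ _ _ (Nat.succ_ne_zero _)]
        rw [t_succ _ _ (by omega)] at h3'
        have h5 : (tInv (c/2)).1 + 1 - ((tInv (c/2)).2 + 1) = (tInv (c/2)).1 - (tInv (c/2)).2 := by
          omega
        rw [h5, pow_succ]
        have h6 : 2 ^ (tInv (c/2)).2 * 2 * (2 * ((tInv (c/2)).1 - (tInv (c/2)).2) + 1)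
            = 2 * (2 ^ (tInv (c/2)).2 * (2 * ((tInv (c/2)).1 - (tInv (c/2)).2) + 1)) := by ring
        rw [h6, h3']
        omega
    · -- odd
      have h1 : c % 2 = 1 := Nat.odd_iff.1 ho
      rw [tInv_odd h1]
      refine ⟨by omega, by omega, ?_⟩
      simp only [t_zero]
      omega

theorem t_le {A B : ℕ} (hBA : B ≤ A) : t A B ≤ 2 ^ A * (2 * A + 1) := by
  rcases Nat.eq_zero_or_pos B with h | h
  · subst h; rw [t_zero]
    have h1 : 2 * A + 1 ≤ 2 ^ A * (2 * A + 1) :=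
      Nat.le_mul_of_pos_left _ (Nat.two_pow_pos A)
    omega
  · rw [t_succ _ _ (by omega)]
    have h1 : (2 : ℕ) ^ B ≤ 2 ^ A := Nat.pow_le_pow_right (by norm_num) hBA
    have h2 : 2 * (A - B) + 1 ≤ 2 * A + 1 := by omega
    exact Nat.mul_le_mul h1 h2

theorem nextE_fst_ge (e : ℕ × ℕ) : e.1 ≤ (nextE e).1 := by
  unfold nextE; split <;> simp

/-- Key bound: jumps from high levels go to high blocks. -/
theorem J_block_large (M : ℕ) {c : ℕ} (hc : 2 ^ M * (2 * M + 1) < c) :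
    ∃ A B, J c = mk A B 1 ∧ M ≤ A := by
  refine ⟨(nextE (tInv c)).1, (nextE (tInv c)).2, rfl, ?_⟩
  have hone : 1 ≤ 2 ^ M * (2 * M + 1) :=
    Nat.one_le_iff_ne_zero.2 (Nat.mul_ne_zero (Nat.two_pow_pos M).ne' (by omega))
  have hc0 : c ≠ 0 := by omega
  obtain ⟨hA1, hBA, ht⟩ := t_tInv c hc0
  have hgoal : M ≤ (tInv c).1 := by
    by_contra hlt
    push_neg at hlt
    have h1 : t (tInv c).1 (tInv c).2 ≤ 2 ^ (tInv c).1 * (2 * (tInv c).1 + 1) := t_le hBA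
    have h2 : (2:ℕ) ^ (tInv c).1 ≤ 2 ^ M := Nat.pow_le_pow_right (by norm_num) (by omega)
    have h3 : 2 * (tInv c).1 + 1 ≤ 2 * M + 1 := by omega
    have h4 : 2 ^ (tInv c).1 * (2 * (tInv c).1 + 1) ≤ 2 ^ M * (2 * M + 1) :=
      Nat.mul_le_mul h2 h3
    omega
  exact le_trans hgoal (nextE_fst_ge _)

/-! ### the orbit -/

def oY (n : ℕ) : Y := fY^[n] (mk 0 0 0)

theorem walk_shift : ∀ (k a B c : ℕ), 1 ≤ a → B ≤ a → c ≠ 0 →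
    fY^[k] (mk (a + k) B c) = mk a B (c + k) := by
  intro k
  induction k with
  | zero => intro a B c _ _ _; simp
  | succ k ih =>
    intro a B c ha hB hc
    have h1 : fY (mk (a + (k + 1)) B c) = mk (a + k) B (c + 1) := by
      have h2 : a + (k + 1) - 1 = a + k := by omega
      rw [step_shift (by omega) (by omega) hc, h2]
    rw [Function.iterate_succ_apply, h1, ih a B (c + 1) ha hB (by omega)]
    congr 1
    omega

theorem walk_id : ∀ (j a B c : ℕ), 1 ≤ a → a + j ≤ B →
    fY^[j] (mk (a + j) B c) = mk a B c := by
  intro j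
  induction j with
  | zero => intro a B c _ _; simp
  | succ j ih =>
    intro a B c ha hB
    have h1 : fY (mk (a + (j + 1)) B c) = mk (a + j) B c := by
      have h2 : a + (j + 1) - 1 = a + j := by omega
      rw [step_id (by omega) (by omega), h2]
    rw [Function.iterate_succ_apply, h1, ih a B c ha (by omega)]

theorem walk_desc : ∀ (j B ℓ : ℕ), ℓ ≠ 0 → j ≤ B →
    fY^[j] (mk 0 B ℓ) = mk 0 (B - j) (2 ^ j * ℓ) := by
  intro j
  induction j with
  | zero => intro B ℓ _ _; simp
  | succ j ih =>
    intro B ℓ hℓ hj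
    rw [Function.iterate_succ_apply, step_zero (by omega) hℓ,
      ih (B - 1) (2 * ℓ) (by omega) (by omega)]
    congr 1
    · omega
    · rw [pow_succ]; ring

theorem walk_shift' {a A B c : ℕ} (ha : 1 ≤ a) (haA : a ≤ A) (hB : B ≤ a) (hc : c ≠ 0) :
    fY^[A - a] (mk A B c) = mk a B (c + (A - a)) := by
  obtain ⟨k, rfl⟩ : ∃ k, A = a + k := ⟨A - a, by omega⟩
  have h : a + k - a = k := by omega
  rw [h]
  exact walk_shift k a B c ha hB hc

theorem walk_id' {a A B c : ℕ} (ha : 1 ≤ a) (haA : a ≤ A) (hAB : A ≤ B) :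
    fY^[A - a] (mk A B c) = mk a B c := by
  obtain ⟨k, rfl⟩ : ∃ k, A = a + k := ⟨A - a, by omega⟩
  have h : a + k - a = k := by omega
  rw [h]
  exact walk_id k a B c ha (by omega)

theorem chain (A B : ℕ) (hA : 1 ≤ A) (hBA : B ≤ A) :
    ∃ m, fY^[m] (mk A B 1) = mk 0 0 (t A B) := by
  rcases Nat.eq_zero_or_pos B with hB | hB
  · subst hB
    refine ⟨1 + (A - 1), ?_⟩
    rw [Function.iterate_add_apply]
    rw [walk_shift' le_rfl hA (by omega) one_ne_zero]
    have h2 : 1 + (A - 1) = A := by omega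
    rw [h2]
    simp only [Function.iterate_one]
    rw [step_one (by omega), t_zero]
  · refine ⟨B + (1 + ((B - 1) + (A - B))), ?_⟩
    rw [Function.iterate_add_apply, Function.iterate_add_apply, Function.iterate_add_apply]
    rw [walk_shift' (a := B) (by omega) hBA le_rfl one_ne_zero]
    rw [walk_id' (a := 1) (A := B) le_rfl (by omega) le_rfl]
    simp only [Function.iterate_one]
    rw [step_one (by omega)]
    have s3 : 2 * (1 + (A - B)) - 1 = 2 * (A - B) + 1 := by omega
    rw [s3, walk_desc B B (2 * (A - B) + 1) (by omega) le_rfl]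
    rw [t_succ _ _ (by omega)]
    congr 1
    omega

def eSeq (i : ℕ) : ℕ × ℕ := nextE^[i] (1, 0)

theorem eSeq_mem (i : ℕ) : 1 ≤ (eSeq i).1 ∧ (eSeq i).2 ≤ (eSeq i).1 := by
  induction i with
  | zero => simp [eSeq]
  | succ i ih =>
    have h : eSeq (i + 1) = nextE (eSeq i) := Function.iterate_succ_apply' _ _ _
    rw [h]
    unfold nextE
    split
    · constructor <;> simp <;> omega
    · simp

theorem entry_reach (i : ℕ) : ∃ n, oY n = mk (eSeq i).1 (eSeq i).2 1 := by
  induction i with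
  | zero => exact ⟨1, step_start⟩
  | succ i ih =>
    obtain ⟨n, hn⟩ := ih
    obtain ⟨hA, hBA⟩ := eSeq_mem i
    obtain ⟨m, hm⟩ := chain _ _ hA hBA
    refine ⟨1 + (m + n), ?_⟩
    have h1 : oY (m + n) = mk 0 0 (t (eSeq i).1 (eSeq i).2) := by
      unfold oY
      rw [Function.iterate_add_apply]
      show fY^[m] (oY n) = _
      rw [hn, hm]
    unfold oY
    rw [Function.iterate_add_apply]
    show fY (oY (m + n)) = _
    rw [h1, step_J (by have := t_pos (B := (eSeq i).2) hA; omega)]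
    unfold J
    rw [tInv_t hA hBA]
    have h2 : eSeq (i + 1) = nextE (eSeq i) := Function.iterate_succ_apply' _ _ _
    rw [h2]

theorem eSeq_surj (A B : ℕ) (hA : 1 ≤ A) (hBA : B ≤ A) : ∃ i, eSeq i = (A, B) := by
  have key : ∀ A', 1 ≤ A' → ∃ i, eSeq i = (A', 0) := by
    intro A'
    induction A' with
    | zero => omega
    | succ A' ihA =>
      intro _
      rcases Nat.eq_zero_or_pos A' with h0 | hpos
      · subst h0; exact ⟨0, rfl⟩
      · obtain ⟨i, hi⟩ := ihA hpos
        -- walk B up from (A',0) to (A',A'), then jump to (A'+1, 0)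
        have up : ∀ B', B' ≤ A' → ∃ j, eSeq j = (A', B') := by
          intro B'
          induction B' with
          | zero => intro _; exact ⟨i, hi⟩
          | succ B' ihB =>
            intro hB'
            obtain ⟨j, hj⟩ := ihB (by omega)
            refine ⟨j + 1, ?_⟩
            have h2 : eSeq (j + 1) = nextE (eSeq j) := Function.iterate_succ_apply' _ _ _
            rw [h2, hj]
            unfold nextE
            rw [if_pos (by simpa using by omega : (A', B').2 < (A', B').1)]
        obtain ⟨j, hj⟩ := up A' le_rfl
        refine ⟨j + 1, ?_⟩
        have h2 : eSeq (j + 1) = nextE (eSeq j) := Function.iterate_succ_apply' _ _ _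
        rw [h2, hj]
        unfold nextE
        rw [if_neg (by simp)]
  obtain ⟨i, hi⟩ := key A hA
  -- now walk up to B
  clear hA
  induction B with
  | zero => exact ⟨i, hi⟩
  | succ B ihB =>
    obtain ⟨j, hj⟩ := ihB (by omega)
    refine ⟨j + 1, ?_⟩
    have h2 : eSeq (j + 1) = nextE (eSeq j) := Function.iterate_succ_apply' _ _ _
    rw [h2, hj]
    unfold nextE
    rw [if_pos (by simpa using by omega : (A, B).2 < (A, B).1)]

theorem coverage_high (a b c : ℕ) (ha : 1 ≤ a) (hc : c ≠ 0) : ∃ n, oY n = mk a b c := by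
  set A := max a b + (c - 1) with hA
  have hA1 : 1 ≤ A := by omega
  have hBA : b ≤ A := by omega
  obtain ⟨i, hi⟩ := eSeq_surj A b hA1 hBA
  obtain ⟨n, hn⟩ := entry_reach i
  rw [hi] at hn
  rcases Nat.lt_or_ge b a with hba | hab
  · refine ⟨(A - a) + n, ?_⟩
    unfold oY
    rw [Function.iterate_add_apply]
    show fY^[A - a] (oY n) = _
    rw [hn, walk_shift' ha (by omega) (by omega) one_ne_zero]
    congr 1
    omega
  · refine ⟨(b - a) + ((A - b) + n), ?_⟩
    unfold oY
    rw [Function.iterate_add_apply, Function.iterate_add_apply]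
    show fY^[b-a] (fY^[A - b] (oY n)) = _
    rw [hn, walk_shift' (a := b) (by omega) (by omega) le_rfl one_ne_zero]
    have h3 : 1 + (A - b) = c := by omega
    rw [h3]
    exact walk_id' ha hab le_rfl

theorem coverage_zero (b : ℕ) : ∀ c, c ≠ 0 → ∃ n, oY n = mk 0 b c := by
  have main : ∀ c, c ≠ 0 → ∀ b, ∃ n, oY n = mk 0 b c := by
    intro c
    induction c using Nat.strong_induction_on with
    | _ c ih =>
      intro hc b
      rcases Nat.even_or_odd c with he | ho
      · have h2 : c % 2 = 0 := Nat.even_iff.1 he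
        obtain ⟨n, hn⟩ := ih (c / 2) (Nat.div_lt_self (by omega) (by norm_num)) (by omega) (b + 1)
        refine ⟨n + 1, ?_⟩
        unfold oY
        rw [Function.iterate_succ_apply']
        show fY (oY n) = _
        rw [hn, step_zero (by omega) (by omega)]
        congr 1 <;> omega
      · have h1 : c % 2 = 1 := Nat.odd_iff.1 ho
        obtain ⟨n, hn⟩ := coverage_high 1 b ((c + 1) / 2) le_rfl (by omega)
        refine ⟨n + 1, ?_⟩
        unfold oY
        rw [Function.iterate_succ_apply']
        show fY (oY n) = _
        rw [hn, step_one (by omega)]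
        congr 1
        omega
  intro c hc
  exact main c hc b

/-! ### topology on `Y` -/

instance : TopologicalSpace Y := Preorder.topology Y
instance : OrderTopology Y := ⟨rfl⟩

theorem Y_cases (y : Y) : y = ⊤ ∨ ∃ a b c, y = mk a b c := by
  cases y with
  | none => exact Or.inl rfl
  | some l =>
    right
    refine ⟨(ofLex l).1, (ofLex (ofLex l).2).1, (ofLex (ofLex l).2).2, ?_⟩
    simp only [mk]
    rfl

theorem isOpen_singleton_iso {a b c : ℕ} (hc : c ≠ 0) : IsOpen ({mk a b c} : Set Y) := by
  have h : ({mk a b c} : Set Y) = Ioo (mk a b (c - 1)) (mk a b (c + 1)) := by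
    ext z
    simp only [mem_singleton_iff, mem_Ioo]
    constructor
    · rintro rfl
      exact ⟨mk_lt_mk.2 (by omega), mk_lt_mk.2 (by omega)⟩
    · rintro ⟨h1, h2⟩
      rcases Y_cases z with rfl | ⟨x, u, v, rfl⟩
      · exact absurd h2 (by simp)
      · rw [mk_lt_mk] at h1 h2
        have : x = a ∧ u = b ∧ v = c := by omega
        rw [this.1, this.2.1, this.2.2]
  rw [h]
  exact isOpen_Ioo

theorem isOpen_singleton_bot : IsOpen ({mk 0 0 0} : Set Y) := by
  have h : ({mk 0 0 0} : Set Y) = Iio (mk 0 0 1) := by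
    ext z
    simp only [mem_singleton_iff, mem_Iio]
    constructor
    · rintro rfl; exact mk_lt_mk.2 (by omega)
    · intro h1
      rcases Y_cases z with rfl | ⟨x, u, v, rfl⟩
      · exact absurd h1 (by simp)
      · rw [mk_lt_mk] at h1
        have : x = 0 ∧ u = 0 ∧ v = 0 := by omega
        rw [this.1, this.2.1, this.2.2]
  rw [h]
  exact isOpen_Iio

theorem continuousAt_of_isOpen_singleton {g : Y → Y} {y : Y} (h : IsOpen ({y} : Set Y)) :
    ContinuousAt g y := by
  unfold ContinuousAt
  rw [(isOpen_singleton_iff_nhds_eq_pure _).1 h]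
  exact tendsto_pure_left.mpr fun s hs => mem_of_mem_nhds hs

theorem top_ne_mk (a b c : ℕ) : (⊤ : Y) ≠ mk a b c := by
  simp [mk]

theorem le_limit_iff {a b : ℕ} (z : Y) : z ≤ mk a b 0 ↔ z < mk a b 1 := by
  rcases Y_cases z with rfl | ⟨x, u, v, rfl⟩
  · simp only [top_le_iff, lt_iff_le_not_ge, le_top]
    constructor
    · intro h; exact absurd h.symm (top_ne_mk a b 0)
    · rintro ⟨h1, -⟩; exact absurd h1.symm (top_ne_mk a b 1)
  · rw [mk_le_mk, mk_lt_mk]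
    omega

theorem Iic_limit_open (a b : ℕ) : IsOpen (Iic (mk a b 0)) := by
  have h : Iic (mk a b 0) = Iio (mk a b 1) := by
    ext z; simpa using le_limit_iff z
  rw [h]; exact isOpen_Iio

theorem Ioc_mem_nhds_limit {a b : ℕ} {l : Y} (hl : l < mk a b 0) :
    Ioc l (mk a b 0) ∈ nhds (mk a b 0) := by
  have : Ioc l (mk a b 0) = Ioi l ∩ Iic (mk a b 0) := rfl
  rw [this]
  exact Filter.inter_mem ((isOpen_Ioi).mem_nhds hl)
    ((Iic_limit_open a b).mem_nhds (mem_Iic.2 le_rfl))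

theorem Ioc_mem_nhds_top {l : Y} (hl : l < ⊤) : Ioc l (⊤ : Y) ∈ nhds ⊤ := by
  have : Ioc l (⊤ : Y) = Ioi l := by
    ext z; simp [Set.mem_Ioc, Set.mem_Ioi, le_top]
  rw [this]
  exact (isOpen_Ioi).mem_nhds hl

/-! ### cofinality lemmas -/

theorem below_top {l : Y} (_hl : l < ⊤) : ∃ A, l ≤ mk A 0 0 := by
  rcases Y_cases l with rfl | ⟨x, u, v, rfl⟩
  · simp at _hl
  · exact ⟨x + 1, mk_le_mk.2 (by omega)⟩

theorem below_block {a : ℕ} {l : Y} (hl : l < mk a 0 0) (ha : 1 ≤ a) :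
    ∃ B, 1 ≤ B ∧ l ≤ mk (a - 1) B 0 := by
  rcases Y_cases l with rfl | ⟨x, u, v, rfl⟩
  · exact absurd hl (by simp)
  · rw [mk_lt_mk] at hl
    exact ⟨u + 1, by omega, mk_le_mk.2 (by omega)⟩

theorem below_fiber {a b : ℕ} {l : Y} (hl : l < mk a b 0) (hb : 1 ≤ b) :
    ∃ C, 1 ≤ C ∧ l ≤ mk a (b - 1) C := by
  rcases Y_cases l with rfl | ⟨x, u, v, rfl⟩
  · exact absurd hl (by simp)
  · rw [mk_lt_mk] at hl
    exact ⟨v + 1, by omega, mk_le_mk.2 (by omega)⟩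

theorem fY_big {x u v : ℕ} (h2 : 2 ≤ x) : ∃ w, fY (mk x u v) = mk (x - 1) u w := by
  rw [fY_mk, if_pos h2]
  split
  · exact ⟨v + 1, rfl⟩
  · exact ⟨v, rfl⟩

theorem fY_big' {x u v : ℕ} (h2 : 2 ≤ x) :
    ∃ w, fY (mk x u v) = mk (x - 1) u w ∧ v ≤ w := by
  rw [fY_mk, if_pos h2]
  split
  · exact ⟨v + 1, rfl, by omega⟩
  · exact ⟨v, rfl, le_rfl⟩

theorem contAt_top : ContinuousAt fY ⊤ := by
  intro U hU
  rw [fY_top] at hU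
  obtain ⟨l', hl', hsub⟩ := exists_Ioc_subset_of_mem_nhds hU ⟨mk 0 0 0, mk_lt_top 0 0 0⟩
  obtain ⟨A, hA⟩ := below_top hl'
  rw [Filter.mem_map]
  refine Filter.mem_of_superset (Ioc_mem_nhds_top (mk_lt_top (A + 2) 0 0)) ?_
  rintro z ⟨h1, -⟩
  rcases Y_cases z with rfl | ⟨x, u, v, rfl⟩
  · show fY ⊤ ∈ U
    rw [fY_top]; exact hsub ⟨hl', le_rfl⟩
  · have hx : A + 2 ≤ x := by
      rcases mk_lt_mk.1 h1 with h | ⟨h, -⟩ <;> omega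
    obtain ⟨w, hw, -⟩ := fY_big' (x := x) (u := u) (v := v) (by omega)
    show fY (mk x u v) ∈ U
    rw [hw]
    exact hsub ⟨lt_of_le_of_lt hA (mk_lt_mk.2 (by omega)), le_top⟩

theorem contAt_case1 (a b : ℕ) (hb : 1 ≤ b) : ContinuousAt fY (mk a b 0) := by
  intro U hU
  rw [Filter.mem_map]
  rcases Nat.lt_or_ge a 2 with ha2 | ha2
  · rcases Nat.eq_zero_or_pos a with rfl | ha1
    · rcases Nat.eq_or_lt_of_le hb with hb1 | hb2
      · -- a = 0, b = 1 : y = ω, fY y = ⊤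
        rw [← hb1] at hU ⊢
        rw [step_omega] at hU
        obtain ⟨l', hl', hsub⟩ := exists_Ioc_subset_of_mem_nhds hU ⟨mk 0 0 0, mk_lt_top 0 0 0⟩
        obtain ⟨A, hA⟩ := below_top hl'
        refine Filter.mem_of_superset (Ioc_mem_nhds_limit (mk_lt_mk.2 (by omega) :
          mk 0 0 (2 ^ (A + 1) * (2 * (A + 1) + 1)) < mk 0 1 0)) ?_
        rintro z ⟨h1, h2⟩
        rcases Y_cases z with rfl | ⟨x, u, v, rfl⟩
        · exact absurd (top_le_iff.1 h2).symm (top_ne_mk 0 1 0)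
        · rw [mk_lt_mk] at h1
          rw [le_limit_iff, mk_lt_mk] at h2
          rcases (by omega : (x = 0 ∧ u = 1 ∧ v = 0) ∨
              (x = 0 ∧ u = 0 ∧ 2 ^ (A + 1) * (2 * (A + 1) + 1) < v)) with
            ⟨hx, hu, hv⟩ | ⟨hx, hu, hv⟩
          · rw [hx, hu, hv]
            show fY (mk 0 1 0) ∈ U
            rw [step_omega]
            exact hsub ⟨hl', le_rfl⟩
          · rw [hx, hu]
            show fY (mk 0 0 v) ∈ U
            rw [step_J (by omega)]
            obtain ⟨A'', B'', hJ, hge⟩ := J_block_large (A + 1) hv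
            rw [hJ]
            exact hsub ⟨lt_of_le_of_lt hA (mk_lt_mk.2 (by omega)), le_top⟩
      · -- a = 0, b ≥ 2
        have hb2' : 2 ≤ b := hb2
        rw [step_zero_limit hb2'] at hU
        obtain ⟨l', hl', hsub⟩ := exists_Ioc_subset_of_mem_nhds hU
          ⟨mk 0 0 0, mk_lt_mk.2 (by omega)⟩
        obtain ⟨C', hC'1, hC'⟩ := below_fiber hl' (by omega)
        refine Filter.mem_of_superset (Ioc_mem_nhds_limit (mk_lt_mk.2 (by omega) :
          mk 0 (b - 1) (C' + 1) < mk 0 b 0)) ?_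
        rintro z ⟨h1, h2⟩
        rcases Y_cases z with rfl | ⟨x, u, v, rfl⟩
        · exact absurd (top_le_iff.1 h2).symm (top_ne_mk 0 b 0)
        · rw [mk_lt_mk] at h1
          rw [le_limit_iff, mk_lt_mk] at h2
          rcases (by omega : (x = 0 ∧ u = b ∧ v = 0) ∨
              (x = 0 ∧ u = b - 1 ∧ C' + 1 ≤ v)) with ⟨hx, hu, hv⟩ | ⟨hx, hu, hv⟩
          · rw [hx, hu, hv]
            show fY (mk 0 b 0) ∈ U
            rw [step_zero_limit hb2']
            exact hsub ⟨hl', le_rfl⟩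
          · rw [hx, hu]
            show fY (mk 0 (b - 1) v) ∈ U
            rw [step_zero (by omega) (by omega)]
            exact hsub ⟨lt_of_le_of_lt hC' (mk_lt_mk.2 (by omega)), mk_le_mk.2 (by omega)⟩
    · -- a = 1
      have ha1' : a = 1 := by omega
      rw [ha1'] at hU ⊢
      rw [step_one_limit (by omega)] at hU
      obtain ⟨l', hl', hsub⟩ := exists_Ioc_subset_of_mem_nhds hU
        ⟨mk 0 0 0, mk_lt_mk.2 (by omega)⟩
      obtain ⟨C', hC'1, hC'⟩ := below_fiber hl' hb
      refine Filter.mem_of_superset (Ioc_mem_nhds_limit (mk_lt_mk.2 (by omega) :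
        mk 1 (b - 1) (C' + 1) < mk 1 b 0)) ?_
      rintro z ⟨h1, h2⟩
      rcases Y_cases z with rfl | ⟨x, u, v, rfl⟩
      · exact absurd (top_le_iff.1 h2).symm (top_ne_mk 1 b 0)
      · rw [mk_lt_mk] at h1
        rw [le_limit_iff, mk_lt_mk] at h2
        rcases (by omega : (x = 1 ∧ u = b ∧ v = 0) ∨
            (x = 1 ∧ u = b - 1 ∧ C' + 1 ≤ v)) with ⟨hx, hu, hv⟩ | ⟨hx, hu, hv⟩
        · rw [hx, hu, hv]
          show fY (mk 1 b 0) ∈ U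
          rw [step_one_limit (by omega)]
          exact hsub ⟨hl', le_rfl⟩
        · rw [hx, hu]
          show fY (mk 1 (b - 1) v) ∈ U
          rw [step_one (by omega)]
          exact hsub ⟨lt_of_le_of_lt hC' (mk_lt_mk.2 (by omega)), mk_le_mk.2 (by omega)⟩
  · -- a ≥ 2
    rw [step_limit2 ha2] at hU
    obtain ⟨l', hl', hsub⟩ := exists_Ioc_subset_of_mem_nhds hU
      ⟨mk 0 0 0, mk_lt_mk.2 (by omega)⟩
    obtain ⟨C', hC'1, hC'⟩ := below_fiber hl' hb
    refine Filter.mem_of_superset (Ioc_mem_nhds_limit (mk_lt_mk.2 (by omega) :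
      mk a (b - 1) (C' + 1) < mk a b 0)) ?_
    rintro z ⟨h1, h2⟩
    rcases Y_cases z with rfl | ⟨x, u, v, rfl⟩
    · exact absurd (top_le_iff.1 h2).symm (top_ne_mk a b 0)
    · rw [mk_lt_mk] at h1
      rw [le_limit_iff, mk_lt_mk] at h2
      rcases (by omega : (x = a ∧ u = b ∧ v = 0) ∨
          (x = a ∧ u = b - 1 ∧ C' + 1 ≤ v)) with ⟨hx, hu, hv⟩ | ⟨hx, hu, hv⟩
      · rw [hx, hu, hv]
        show fY (mk a b 0) ∈ U
        rw [step_limit2 ha2]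
        exact hsub ⟨hl', le_rfl⟩
      · rw [hx, hu]
        obtain ⟨w, hw, hvw⟩ := fY_big' (x := a) (u := b - 1) (v := v) ha2
        show fY (mk a (b - 1) v) ∈ U
        rw [hw]
        exact hsub ⟨lt_of_le_of_lt hC' (mk_lt_mk.2 (by omega)), mk_le_mk.2 (by omega)⟩

theorem contAt_case2 (a : ℕ) (ha : 1 ≤ a) : ContinuousAt fY (mk a 0 0) := by
  intro U hU
  rw [Filter.mem_map]
  rcases Nat.lt_or_ge a 3 with ha3 | ha3
  · rcases Nat.eq_or_lt_of_le ha with ha1 | ha2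
    · -- a = 1 : fixed point ω²
      rw [← ha1] at hU ⊢
      rw [step_fixed] at hU
      obtain ⟨l', hl', hsub⟩ := exists_Ioc_subset_of_mem_nhds hU
        ⟨mk 0 0 0, mk_lt_mk.2 (by omega)⟩
      obtain ⟨B', hB'1, hB'⟩ := below_block hl' le_rfl
      refine Filter.mem_of_superset (Ioc_mem_nhds_limit (mk_lt_mk.2 (by omega) :
        mk 0 (B' + 2) 0 < mk 1 0 0)) ?_
      rintro z ⟨h1, h2⟩
      rcases Y_cases z with rfl | ⟨x, u, v, rfl⟩
      · exact absurd (top_le_iff.1 h2).symm (top_ne_mk 1 0 0)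
      · rw [mk_lt_mk] at h1
        rw [le_limit_iff, mk_lt_mk] at h2
        rcases (by omega : (x = 1 ∧ u = 0 ∧ v = 0) ∨
            (x = 0 ∧ B' + 2 ≤ u)) with ⟨hx, hu, hv⟩ | ⟨hx, hu⟩
        · rw [hx, hu, hv]
          show fY (mk 1 0 0) ∈ U
          rw [step_fixed]
          exact hsub ⟨hl', le_rfl⟩
        · rw [hx]
          show fY (mk 0 u v) ∈ U
          rcases Nat.eq_zero_or_pos v with hv | hv
          · rw [hv, step_zero_limit (by omega)]
            exact hsub ⟨lt_of_le_of_lt hB' (mk_lt_mk.2 (by omega)), mk_le_mk.2 (by omega)⟩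
          · rw [step_zero (by omega) (by omega)]
            exact hsub ⟨lt_of_le_of_lt hB' (mk_lt_mk.2 (by omega)), mk_le_mk.2 (by omega)⟩
    · -- a = 2
      have ha2' : a = 2 := by omega
      rw [ha2'] at hU ⊢
      rw [step_limit2 (by omega)] at hU
      obtain ⟨l', hl', hsub⟩ := exists_Ioc_subset_of_mem_nhds hU
        ⟨mk 0 0 0, mk_lt_mk.2 (by omega)⟩
      obtain ⟨B', hB'1, hB'⟩ := below_block hl' le_rfl
      refine Filter.mem_of_superset (Ioc_mem_nhds_limit (mk_lt_mk.2 (by omega) :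
        mk 1 (B' + 1) 0 < mk 2 0 0)) ?_
      rintro z ⟨h1, h2⟩
      rcases Y_cases z with rfl | ⟨x, u, v, rfl⟩
      · exact absurd (top_le_iff.1 h2).symm (top_ne_mk 2 0 0)
      · rw [mk_lt_mk] at h1
        rw [le_limit_iff, mk_lt_mk] at h2
        rcases (by omega : (x = 2 ∧ u = 0 ∧ v = 0) ∨
            (x = 1 ∧ B' + 1 ≤ u)) with ⟨hx, hu, hv⟩ | ⟨hx, hu⟩
        · rw [hx, hu, hv]
          show fY (mk 2 0 0) ∈ U
          rw [step_limit2 (by omega)]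
          exact hsub ⟨hl', le_rfl⟩
        · rw [hx]
          show fY (mk 1 u v) ∈ U
          rcases Nat.eq_zero_or_pos v with hv | hv
          · rw [hv, step_one_limit (by omega)]
            exact hsub ⟨lt_of_le_of_lt hB' (mk_lt_mk.2 (by omega)), mk_le_mk.2 (by omega)⟩
          · rw [step_one (by omega)]
            exact hsub ⟨lt_of_le_of_lt hB' (mk_lt_mk.2 (by omega)), mk_le_mk.2 (by omega)⟩
  · -- a ≥ 3
    rw [step_limit2 (by omega)] at hU
    obtain ⟨l', hl', hsub⟩ := exists_Ioc_subset_of_mem_nhds hU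
      ⟨mk 0 0 0, mk_lt_mk.2 (by omega)⟩
    obtain ⟨B', hB'1, hB'⟩ := below_block hl' (by omega)
    refine Filter.mem_of_superset (Ioc_mem_nhds_limit (mk_lt_mk.2 (by omega) :
      mk (a - 1) (B' + 1) 0 < mk a 0 0)) ?_
    rintro z ⟨h1, h2⟩
    rcases Y_cases z with rfl | ⟨x, u, v, rfl⟩
    · exact absurd (top_le_iff.1 h2).symm (top_ne_mk a 0 0)
    · rw [mk_lt_mk] at h1
      rw [le_limit_iff, mk_lt_mk] at h2
      rcases (by omega : (x = a ∧ u = 0 ∧ v = 0) ∨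
          (x = a - 1 ∧ B' + 1 ≤ u)) with ⟨hx, hu, hv⟩ | ⟨hx, hu⟩
      · rw [hx, hu, hv]
        show fY (mk a 0 0) ∈ U
        rw [step_limit2 (by omega)]
        exact hsub ⟨hl', le_rfl⟩
      · rw [hx]
        obtain ⟨w, hw, -⟩ := fY_big' (x := a - 1) (u := u) (v := v) (by omega)
        show fY (mk (a - 1) u v) ∈ U
        rw [hw]
        exact hsub ⟨lt_of_le_of_lt hB' (mk_lt_mk.2 (by omega)), mk_le_mk.2 (by omega)⟩

theorem fY_continuous : Continuous fY := by
  rw [continuous_iff_continuousAt]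
  intro y
  rcases Y_cases y with rfl | ⟨a, b, c, rfl⟩
  · exact contAt_top
  · rcases Nat.eq_zero_or_pos c with hc | hc
    · rcases Nat.eq_zero_or_pos b with hb | hb
      · rcases Nat.eq_zero_or_pos a with ha | ha
        · rw [hc, hb, ha]
          exact continuousAt_of_isOpen_singleton isOpen_singleton_bot
        · rw [hc, hb]
          exact contAt_case2 a ha
      · rw [hc]
        exact contAt_case1 a b hb
    · exact continuousAt_of_isOpen_singleton (isOpen_singleton_iso (by omega))

/-! ### limit dynamics -/

theorem iter_top (n : ℕ) : fY^[n] (⊤ : Y) = ⊤ := by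
  induction n with
  | zero => rfl
  | succ n ih => rw [Function.iterate_succ_apply', ih, fY_top]

theorem iter_fixed (n : ℕ) : fY^[n] (mk 1 0 0) = mk 1 0 0 := by
  induction n with
  | zero => rfl
  | succ n ih => rw [Function.iterate_succ_apply', ih, step_fixed]

theorem walk_rank2 : ∀ k, fY^[k] (mk (1 + k) 0 0) = mk 1 0 0 := by
  intro k
  induction k with
  | zero => rfl
  | succ k ih =>
    rw [Function.iterate_succ_apply, step_limit2 (by omega)]
    have h : 1 + (k + 1) - 1 = 1 + k := by omega
    rw [h, ih]

theorem walk_rank1 : ∀ k b, 1 ≤ b → fY^[k] (mk k b 0) = mk 0 b 0 := by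
  intro k
  induction k with
  | zero => intro b _; rfl
  | succ k ih =>
    intro b hb
    rcases Nat.eq_zero_or_pos k with rfl | hk
    · rw [Function.iterate_succ_apply, step_one_limit (by omega)]
      rfl
    · rw [Function.iterate_succ_apply, step_limit2 (by omega)]
      have h : k + 1 - 1 = k := by omega
      rw [h, ih b hb]

theorem walk_fib : ∀ k, fY^[k] (mk 0 (1 + k) 0) = mk 0 1 0 := by
  intro k
  induction k with
  | zero => rfl
  | succ k ih =>
    rw [Function.iterate_succ_apply, step_zero_limit (by omega)]
    have h : 1 + (k + 1) - 1 = 1 + k := by omega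
    rw [h, ih]

theorem limit_collapse (a b : ℕ) (hab : ¬(a = 0 ∧ b = 0)) :
    ∃ M z, (z = mk 1 0 0 ∨ z = (⊤ : Y)) ∧ ∀ m, M ≤ m → fY^[m] (mk a b 0) = z := by
  rcases Nat.eq_zero_or_pos b with rfl | hb
  · -- b = 0, a ≥ 1 : collapses to the fixed point ω²
    obtain ⟨k, rfl⟩ : ∃ k, a = 1 + k := ⟨a - 1, by omega⟩
    refine ⟨k, mk 1 0 0, Or.inl rfl, ?_⟩
    intro m hm
    obtain ⟨d, rfl⟩ : ∃ d, m = d + k := ⟨m - k, by omega⟩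
    rw [Function.iterate_add_apply, walk_rank2 k, iter_fixed]
  · -- b ≥ 1 : collapses to ⊤
    obtain ⟨k, hk⟩ : ∃ k, b = 1 + k := ⟨b - 1, by omega⟩
    refine ⟨1 + (k + a), ⊤, Or.inr rfl, ?_⟩
    intro m hm
    obtain ⟨d, rfl⟩ : ∃ d, m = d + (1 + (k + a)) := ⟨m - (1 + (k + a)), by omega⟩
    rw [Function.iterate_add_apply, Function.iterate_add_apply,
      Function.iterate_add_apply, walk_rank1 a b hb]
    rw [hk, walk_fib k]
    rw [Function.iterate_one, step_omega, iter_top]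

/-! ### density of the orbit -/

theorem oY_dense : Dense (Set.range oY) := by
  intro y
  rw [mem_closure_iff_nhds]
  intro U hU
  rcases Y_cases y with rfl | ⟨a, b, c, rfl⟩
  · obtain ⟨l', hl', hsub⟩ := exists_Ioc_subset_of_mem_nhds hU ⟨mk 0 0 0, mk_lt_top 0 0 0⟩
    obtain ⟨A, hA⟩ := below_top hl'
    obtain ⟨n, hn⟩ := coverage_high (A + 1) 0 1 (by omega) one_ne_zero
    refine ⟨oY n, hsub ⟨?_, le_top⟩, ⟨n, rfl⟩⟩
    rw [hn]
    exact lt_of_le_of_lt hA (mk_lt_mk.2 (by omega))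
  · rcases Nat.eq_zero_or_pos c with rfl | hc
    · rcases Nat.eq_zero_or_pos b with rfl | hb
      · rcases Nat.eq_zero_or_pos a with rfl | ha
        · exact ⟨mk 0 0 0, mem_of_mem_nhds hU, ⟨0, rfl⟩⟩
        · -- y = mk a 0 0, a ≥ 1
          obtain ⟨l', hl', hsub⟩ := exists_Ioc_subset_of_mem_nhds hU
            ⟨mk 0 0 0, mk_lt_mk.2 (by omega)⟩
          obtain ⟨B', hB'1, hB'⟩ := below_block hl' ha
          obtain ⟨n, hn⟩ : ∃ n, oY n = mk (a - 1) B' 1 := by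
            rcases Nat.eq_zero_or_pos (a - 1) with h0 | h0
            · rw [h0]; exact coverage_zero B' 1 one_ne_zero
            · exact coverage_high (a - 1) B' 1 h0 one_ne_zero
          refine ⟨oY n, hsub ⟨?_, ?_⟩, ⟨n, rfl⟩⟩
          · rw [hn]; exact lt_of_le_of_lt hB' (mk_lt_mk.2 (by omega))
          · rw [hn]; exact mk_le_mk.2 (by omega)
      · -- y = mk a b 0, b ≥ 1
        obtain ⟨l', hl', hsub⟩ := exists_Ioc_subset_of_mem_nhds hU
          ⟨mk 0 0 0, mk_lt_mk.2 (by omega)⟩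
        obtain ⟨C', hC'1, hC'⟩ := below_fiber hl' hb
        obtain ⟨n, hn⟩ : ∃ n, oY n = mk a (b - 1) (C' + 1) := by
          rcases Nat.eq_zero_or_pos a with h0 | h0
          · rw [h0]; exact coverage_zero (b - 1) (C' + 1) (by omega)
          · exact coverage_high a (b - 1) (C' + 1) h0 (by omega)
        refine ⟨oY n, hsub ⟨?_, ?_⟩, ⟨n, rfl⟩⟩
        · rw [hn]; exact lt_of_le_of_lt hC' (mk_lt_mk.2 (by omega))
        · rw [hn]; exact mk_le_mk.2 (by omega)
    · -- isolated point
      obtain ⟨n, hn⟩ : ∃ n, oY n = mk a b c := by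
        rcases Nat.eq_zero_or_pos a with h0 | h0
        · rw [h0]; exact coverage_zero b c (by omega)
        · exact coverage_high a b c h0 (by omega)
      exact ⟨mk a b c, mem_of_mem_nhds hU, ⟨n, hn⟩⟩

/-! ### non-periodicity -/

theorem oY_add (m n : ℕ) : oY (n + m) = fY^[n] (oY m) := by
  unfold oY
  rw [Function.iterate_add_apply]

theorem oY_nonperiodic {n m : ℕ} (hnm : n < m) (h : oY n = oY m) : False := by
  have shift : ∀ k, oY (k + n) = oY (k + m) := by
    intro k
    rw [oY_add, oY_add, h]
  have key : ∀ N, ∃ j, j < m ∧ oY N = oY j := by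
    intro N
    induction N using Nat.strong_induction_on with
    | _ N ih =>
      rcases Nat.lt_or_ge N m with hN | hN
      · exact ⟨N, hN, rfl⟩
      · have h2' : N - (m - n) = N - m + n := by omega
        have h3 : N = N - m + m := by omega
        have h1 : oY N = oY (N - (m - n)) := by
          calc oY N = oY (N - m + m) := by rw [← h3]
          _ = oY (N - m + n) := (shift (N - m)).symm
          _ = oY (N - (m - n)) := (congrArg oY h2'.symm)
        obtain ⟨j, hj, hj2⟩ := ih (N - (m - n)) (by omega)
        exact ⟨j, hj, h1.trans hj2⟩
  have hsub : Set.range oY ⊆ oY '' (Set.Iio m) := by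
    rintro z ⟨N, rfl⟩
    obtain ⟨j, hj, hj2⟩ := key N
    exact ⟨j, hj, hj2.symm⟩
  have hfin : (Set.range oY).Finite :=
    Set.Finite.subset ((Set.finite_Iio m).image oY) hsub
  have hinf : (Set.range oY).Infinite := by
    apply Set.infinite_of_injective_forall_mem (f := fun c : ℕ => mk 0 0 (c + 1))
    · intro c c' hcc
      have := mk_injective hcc
      omega
    · intro c
      obtain ⟨n', hn'⟩ := coverage_zero 0 (c + 1) (by omega)
      exact ⟨n', hn'⟩
  exact hinf hfin

theorem oY_subsingleton (z : Y) : {n | oY n = z}.Subsingleton := by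
  intro n hn m hm
  by_contra hne
  rcases Nat.lt_or_ge n m with h | h
  · exact oY_nonperiodic h (hn.trans hm.symm)
  · exact oY_nonperiodic (by omega : m < n) (hm.trans hn.symm)

/-! ### witnesses -/

theorem witness_high (j M : ℕ) :
    ∃ n, M ≤ n ∧ ∃ x u v, oY n = mk x u v ∧ j ≤ x := by
  have hcov : ∀ c : ℕ, ∃ n, oY n = mk (j + 1) 0 (c + 1) := fun c =>
    coverage_high (j + 1) 0 (c + 1) (by omega) (by omega)
  choose pos hpos using hcov
  have hinj : Function.Injective pos := by
    intro c c' hcc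
    have h1 : oY (pos c) = oY (pos c') := by rw [hcc]
    rw [hpos, hpos] at h1
    have := mk_injective h1
    omega
  by_contra hcon
  push_neg at hcon
  have hlt : ∀ c, pos c < M := by
    intro c
    by_contra hge
    push_neg at hge
    have := hcon (pos c) hge (j + 1) 0 (c + 1) (hpos c)
    omega
  have hinj2 : Function.Injective (fun c : Fin (M + 1) => (⟨pos c, hlt c⟩ : Fin M)) := by
    intro c c' hcc
    simp only [Fin.mk.injEq] at hcc
    exact Fin.val_injective (by exact_mod_cast hinj hcc)
  have := Fintype.card_le_of_injective _ hinj2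
  simp only [Fintype.card_fin] at this
  omega

theorem witness_zero (j M : ℕ) :
    ∃ n, M ≤ n ∧ ∃ u v, oY n = mk 0 u v ∧ j ≤ u := by
  have hcov : ∀ c : ℕ, ∃ n, oY n = mk 0 j (c + 1) := fun c =>
    coverage_zero j (c + 1) (by omega)
  choose pos hpos using hcov
  have hinj : Function.Injective pos := by
    intro c c' hcc
    have h1 : oY (pos c) = oY (pos c') := by rw [hcc]
    rw [hpos, hpos] at h1
    have := mk_injective h1
    omega
  by_contra hcon
  push_neg at hcon
  have hlt : ∀ c, pos c < M := by
    intro c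
    by_contra hge
    push_neg at hge
    have := hcon (pos c) hge j (c + 1) (hpos c)
    omega
  have hinj2 : Function.Injective (fun c : Fin (M + 1) => (⟨pos c, hlt c⟩ : Fin M)) := by
    intro c c' hcc
    simp only [Fin.mk.injEq] at hcc
    exact Fin.val_injective (by exact_mod_cast hinj hcc)
  have := Fintype.card_le_of_injective _ hinj2
  simp only [Fintype.card_fin] at this
  omega

/-! ### the main discontinuity theorem on `Y` -/

theorem finite_not_mem_ultra {p : Ultrafilter ℕ} (hp : (p : Filter ℕ) ≤ Filter.cofinite)
    {s : Set ℕ} (hs : s.Finite) : s ∉ p := by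
  intro hmem
  have h1 : sᶜ ∈ Filter.cofinite := by
    rw [Filter.mem_cofinite, compl_compl]
    exact hs
  have h2 : sᶜ ∈ p := hp h1
  have h3 := Filter.inter_mem hmem h2
  rw [Set.inter_compl_self] at h3
  exact (Filter.empty_notMem (p : Filter ℕ)) h3

theorem main_Y (p : Ultrafilter ℕ) (hp : (p : Filter ℕ) ≤ Filter.cofinite)
    (g : Y → Y) (hg : ∀ x, Filter.Tendsto (fun n : ℕ => fY^[n] x) (p : Filter ℕ) (nhds (g x))) :
    ¬ Continuous g := by
  intro hcont
  obtain ⟨γ, hγdef⟩ : ∃ γ, g (mk 0 0 0) = γ := ⟨_, rfl⟩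
  have hγ : Filter.Tendsto oY (p : Filter ℕ) (nhds γ) := by
    have := hg (mk 0 0 0)
    rw [hγdef] at this
    exact this
  -- the value of g along the orbit is the orbit of γ
  have horb : ∀ m, g (oY m) = fY^[m] γ := by
    intro m
    have h1 : Filter.Tendsto (fun n : ℕ => oY (n + m)) (p : Filter ℕ) (nhds (g (oY m))) := by
      have h0 := hg (oY m)
      have heq1 : (fun n : ℕ => fY^[n] (oY m)) = fun n : ℕ => oY (n + m) :=
        funext fun n => (oY_add m n).symm
      rw [heq1] at h0
      exact h0
    have h2 : Filter.Tendsto (fun n : ℕ => oY (n + m)) (p : Filter ℕ) (nhds (fY^[m] γ)) := by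
      have h3 : Filter.Tendsto (fun n : ℕ => fY^[m] (oY n)) (p : Filter ℕ)
          (nhds (fY^[m] γ)) := ((fY_continuous.iterate m).continuousAt.tendsto).comp hγ
      have heq2 : (fun n : ℕ => fY^[m] (oY n)) = fun n : ℕ => oY (n + m) := by
        funext n
        rw [add_comm n m]
        exact (oY_add n m).symm
      rw [heq2] at h3
      exact h3
    exact tendsto_nhds_unique h1 h2
  -- γ is not isolated
  have hγlim : γ = ⊤ ∨ ∃ a b, ¬(a = 0 ∧ b = 0) ∧ γ = mk a b 0 := by
    rcases Y_cases γ with h | ⟨a, b, c, h⟩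
    · exact Or.inl h
    · rcases Nat.eq_zero_or_pos c with hc | hc
      · rcases Nat.eq_zero_or_pos (a + b) with hab | hab
        · exfalso
          have hbot : γ = mk 0 0 0 := by
            rw [h, (by omega : a = 0), (by omega : b = 0), hc]
          have hopen : IsOpen ({γ} : Set Y) := hbot ▸ isOpen_singleton_bot
          have hmem : {n | oY n ∈ ({γ} : Set Y)} ∈ p := hγ (hopen.mem_nhds rfl)
          exact finite_not_mem_ultra hp ((oY_subsingleton γ).finite) hmem
        · exact Or.inr ⟨a, b, by omega, by rw [h, hc]⟩
      · exfalso
        have hopen : IsOpen ({γ} : Set Y) := h ▸ isOpen_singleton_iso (by omega)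
        have hmem : {n | oY n ∈ ({γ} : Set Y)} ∈ p := hγ (hopen.mem_nhds rfl)
        exact finite_not_mem_ultra hp ((oY_subsingleton γ).finite) hmem
  -- γ's orbit collapses to a fixed point z
  obtain ⟨M, z, hz, hcoll⟩ : ∃ M z, (z = mk 1 0 0 ∨ z = (⊤ : Y)) ∧
      ∀ m, M ≤ m → fY^[m] γ = z := by
    rcases hγlim with h | ⟨a, b, hab, h⟩
    · exact ⟨0, ⊤, Or.inr rfl, fun m _ => by rw [h, iter_top]⟩
    · obtain ⟨M, z, hz, hcoll⟩ := limit_collapse a b hab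
      exact ⟨M, z, hz, fun m hm => by rw [h]; exact hcoll m hm⟩
  -- fixed values of g at ⊤ and ω²
  have hgtop : g ⊤ = ⊤ := by
    have h1 := hg ⊤
    have h2 : (fun n : ℕ => fY^[n] (⊤ : Y)) = fun _ => (⊤ : Y) := funext iter_top
    rw [h2] at h1
    exact tendsto_nhds_unique h1 tendsto_const_nhds
  have hgfix : g (mk 1 0 0) = mk 1 0 0 := by
    have h1 := hg (mk 1 0 0)
    have h2 : (fun n : ℕ => fY^[n] (mk 1 0 0)) = fun _ => mk 1 0 0 := funext iter_fixed
    rw [h2] at h1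
    exact tendsto_nhds_unique h1 tendsto_const_nhds
  rcases hz with rfl | rfl
  · -- z = ω² : witnesses tending to ⊤
    choose pos hpos1 hpos2 using fun j => witness_high j M
    have hx : Filter.Tendsto (fun j => oY (pos j)) atTop (nhds (⊤ : Y)) := by
      intro U hU
      obtain ⟨l', hl', hsub⟩ := exists_Ioc_subset_of_mem_nhds hU ⟨mk 0 0 0, mk_lt_top 0 0 0⟩
      obtain ⟨A, hA⟩ := below_top hl'
      rw [Filter.mem_map]
      refine Filter.mem_of_superset (Filter.eventually_atTop.2 ⟨A + 1, fun j hj => ?_⟩)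
        fun a ha => ha
      obtain ⟨x, u, v, hxuv, hxj⟩ := hpos2 j
      show oY (pos j) ∈ U
      apply hsub
      refine ⟨?_, le_top⟩
      rw [hxuv]
      exact lt_of_le_of_lt hA (mk_lt_mk.2 (by omega))
    have hgx : Filter.Tendsto (fun j => g (oY (pos j))) atTop (nhds (g ⊤)) :=
      (hcont.continuousAt.tendsto).comp hx
    have hconst : (fun j => g (oY (pos j))) = fun _ => mk 1 0 0 := by
      funext j
      rw [horb, hcoll _ (hpos1 j)]
    rw [hconst, hgtop] at hgx
    have hfin := tendsto_nhds_unique hgx tendsto_const_nhds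
    exact top_ne_mk 1 0 0 hfin
  · -- z = ⊤ : witnesses tending to ω²
    choose pos hpos1 hpos2 using fun j => witness_zero j M
    have hx : Filter.Tendsto (fun j => oY (pos j)) atTop (nhds (mk 1 0 0)) := by
      intro U hU
      obtain ⟨l', hl', hsub⟩ := exists_Ioc_subset_of_mem_nhds hU
        ⟨mk 0 0 0, mk_lt_mk.2 (by omega)⟩
      obtain ⟨B', hB'1, hB'⟩ := below_block hl' le_rfl
      rw [Filter.mem_map]
      refine Filter.mem_of_superset (Filter.eventually_atTop.2 ⟨B' + 1, fun j hj => ?_⟩)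
        fun a ha => ha
      obtain ⟨u, v, huv, hu⟩ := hpos2 j
      show oY (pos j) ∈ U
      apply hsub
      constructor
      · rw [huv]
        exact lt_of_le_of_lt hB' (mk_lt_mk.2 (by omega))
      · rw [huv]
        exact mk_le_mk.2 (by omega)
    have hgx : Filter.Tendsto (fun j => g (oY (pos j))) atTop (nhds (g (mk 1 0 0))) :=
      (hcont.continuousAt.tendsto).comp hx
    have hconst : (fun j => g (oY (pos j))) = fun _ => (⊤ : Y) := by
      funext j
      rw [horb, hcoll _ (hpos1 j)]
    rw [hconst, hgfix] at hgx
    have hfin := tendsto_nhds_unique hgx tendsto_const_nhds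
    exact top_ne_mk 1 0 0 hfin.symm

/-! ### the order isomorphism with `Iic (ω^3)` -/

open Ordinal in
noncomputable def val : Y → Ordinal := fun y =>
  match y with
  | ⊤ => omega0 ^ (3 : Ordinal)
  | (l : L) =>
    omega0 ^ (2 : Ordinal) * ((ofLex l).1 : ℕ) + omega0 * ((ofLex (ofLex l).2).1 : ℕ)
      + ((ofLex (ofLex l).2).2 : ℕ)

open Ordinal

theorem val_top : val ⊤ = omega0 ^ (3 : Ordinal) := rfl

theorem val_mk (a b c : ℕ) :
    val (mk a b c) = omega0 ^ (2 : Ordinal) * a + omega0 * b + c := rfl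

theorem omega_sq : omega0 ^ (2 : Ordinal) = omega0 * omega0 := by
  have h : (2 : Ordinal) = 1 + 1 := by norm_num
  rw [h, opow_add, opow_one]

theorem omega_cube : omega0 ^ (3 : Ordinal) = omega0 ^ (2 : Ordinal) * omega0 := by
  have h : (3 : Ordinal) = 2 + 1 := by norm_num
  rw [h, opow_add, opow_one]

theorem fiber_lt (b c : ℕ) : omega0 * b + c < omega0 ^ (2 : Ordinal) := by
  rw [omega_sq]
  calc omega0 * b + (c : Ordinal) < omega0 * b + omega0 :=
        add_lt_add_right (nat_lt_omega0 c) _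
    _ = omega0 * ((b : Ordinal) + 1) := by rw [Ordinal.add_one_eq_succ, mul_succ]
    _ ≤ omega0 * omega0 := by
        apply mul_le_mul_right
        have := (nat_lt_omega0 (b + 1)).le
        exact_mod_cast this

theorem block_lt (a b c : ℕ) :
    omega0 ^ (2 : Ordinal) * a + (omega0 * b + c) < omega0 ^ (3 : Ordinal) := by
  rw [omega_cube]
  calc omega0 ^ (2 : Ordinal) * a + (omega0 * b + (c : Ordinal))
      < omega0 ^ (2 : Ordinal) * a + omega0 ^ (2 : Ordinal) :=
        add_lt_add_right (fiber_lt b c) _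
    _ = omega0 ^ (2 : Ordinal) * ((a : Ordinal) + 1) := by rw [Ordinal.add_one_eq_succ, mul_succ]
    _ ≤ omega0 ^ (2 : Ordinal) * omega0 := by
        apply mul_le_mul_right
        have := (nat_lt_omega0 (a + 1)).le
        exact_mod_cast this

theorem val_lt_top (a b c : ℕ) : val (mk a b c) < omega0 ^ (3 : Ordinal) := by
  rw [val_mk, add_assoc]
  exact block_lt a b c

theorem val_le (y : Y) : val y ≤ omega0 ^ (3 : Ordinal) := by
  rcases Y_cases y with rfl | ⟨a, b, c, rfl⟩
  · exact le_of_eq val_top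
  · exact (val_lt_top a b c).le

theorem val_strictMono : StrictMono val := by
  intro y z hyz
  rcases Y_cases z with rfl | ⟨a', b', c', rfl⟩
  · rcases Y_cases y with rfl | ⟨a, b, c, rfl⟩
    · exact absurd hyz (lt_irrefl _)
    · rw [val_top]
      exact val_lt_top a b c
  · rcases Y_cases y with rfl | ⟨a, b, c, rfl⟩
    · exact absurd (hyz.trans (mk_lt_top a' b' c')) (lt_irrefl _)
    · rw [val_mk, val_mk]
      rcases mk_lt_mk.1 hyz with ha | ⟨ha, hb | ⟨hb, hc⟩⟩
      · -- a < a'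
        rw [add_assoc, add_assoc]
        calc omega0 ^ (2 : Ordinal) * a + (omega0 * b + (c : Ordinal))
            < omega0 ^ (2 : Ordinal) * a + omega0 ^ (2 : Ordinal) :=
              add_lt_add_right (fiber_lt b c) _
          _ = omega0 ^ (2 : Ordinal) * ((a : Ordinal) + 1) := by rw [Ordinal.add_one_eq_succ, mul_succ]
          _ ≤ omega0 ^ (2 : Ordinal) * a' := by
              apply mul_le_mul_right
              exact_mod_cast Nat.cast_le.2 (by omega : a + 1 ≤ a')
          _ ≤ _ := le_self_add
      · -- a = a', b < b'
        rw [ha, add_assoc, add_assoc]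
        apply add_lt_add_right
        calc omega0 * b + (c : Ordinal) < omega0 * b + omega0 :=
              add_lt_add_right (nat_lt_omega0 c) _
          _ = omega0 * ((b : Ordinal) + 1) := by rw [Ordinal.add_one_eq_succ, mul_succ]
          _ ≤ omega0 * b' := by
              apply mul_le_mul_right
              exact_mod_cast Nat.cast_le.2 (by omega : b + 1 ≤ b')
          _ ≤ _ := le_self_add
      · -- a = a', b = b', c < c'
        rw [ha, hb]
        apply add_lt_add_right
        exact_mod_cast hc

theorem val_surj_Iic (x : Ordinal) (hx : x ≤ omega0 ^ (3 : Ordinal)) : ∃ y, val y = x := by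
  rcases eq_or_lt_of_le hx with rfl | hlt
  · exact ⟨⊤, val_top⟩
  · have hω2 : omega0 ^ (2 : Ordinal) ≠ 0 := by
      apply ne_of_gt
      apply opow_pos
      exact omega0_pos
    have hω : omega0 ≠ 0 := ne_of_gt omega0_pos
    obtain ⟨a, ha⟩ : ∃ a : ℕ, x / omega0 ^ (2 : Ordinal) = a := by
      rw [← lt_omega0]
      rw [div_lt hω2, ← omega_cube]
      exact hlt
    have hr : x % omega0 ^ (2 : Ordinal) < omega0 ^ (2 : Ordinal) := mod_lt x hω2
    set r := x % omega0 ^ (2 : Ordinal) with hrdef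
    obtain ⟨b, hb⟩ : ∃ b : ℕ, r / omega0 = b := by
      rw [← lt_omega0, div_lt hω, ← omega_sq]
      exact hr
    obtain ⟨c, hc⟩ : ∃ c : ℕ, r % omega0 = c := by
      rw [← lt_omega0]
      exact mod_lt r hω
    refine ⟨mk a b c, ?_⟩
    rw [val_mk, add_assoc]
    have h1 : omega0 * b + c = r := by
      rw [← hb, ← hc]
      exact div_add_mod r omega0
    rw [h1, ← ha]
    exact div_add_mod x (omega0 ^ (2 : Ordinal))

noncomputable def valX : Y → (Set.Iic (omega0 ^ (3 : Ordinal))) := fun y => ⟨val y, val_le y⟩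

theorem valX_strictMono : StrictMono valX := fun y z h =>
  Subtype.mk_lt_mk.2 (val_strictMono h)

theorem valX_surj : Function.Surjective valX := by
  rintro ⟨x, hx⟩
  obtain ⟨y, hy⟩ := val_surj_Iic x hx
  exact ⟨y, Subtype.ext hy⟩

noncomputable def φiso : Y ≃o (Set.Iic (omega0 ^ (3 : Ordinal))) :=
  StrictMono.orderIsoOfSurjective valX valX_strictMono valX_surj

noncomputable def φ : Y ≃ₜ (Set.Iic (omega0 ^ (3 : Ordinal))) :=
  φiso.toHomeomorph

/-! ### transfer to `Iic (ω^3)` -/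

noncomputable def FX : (Set.Iic (omega0 ^ (3 : Ordinal))) → (Set.Iic (omega0 ^ (3 : Ordinal))) :=
  ⇑φ ∘ fY ∘ ⇑φ.symm

theorem FX_iter (n : ℕ) (x : Set.Iic (omega0 ^ (3 : Ordinal))) :
    FX^[n] x = φ (fY^[n] (φ.symm x)) := by
  induction n generalizing x with
  | zero => simp
  | succ n ih =>
    rw [Function.iterate_succ_apply, Function.iterate_succ_apply]
    rw [ih (FX x)]
    show _ = φ (fY^[n] (fY (φ.symm x)))
    congr 1
    show fY^[n] (φ.symm (φ (fY (φ.symm x)))) = _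
    rw [Homeomorph.symm_apply_apply]

theorem FX_continuous : Continuous FX :=
  φ.continuous.comp (fY_continuous.comp φ.symm.continuous)

theorem FX_dense_orbit :
    Dense (Set.range fun n : ℕ => FX^[n] (φ (mk 0 0 0))) := by
  have heq : (fun n : ℕ => FX^[n] (φ (mk 0 0 0))) = ⇑φ ∘ oY := by
    funext n
    rw [FX_iter]
    show φ (fY^[n] (φ.symm (φ (mk 0 0 0)))) = _
    rw [Homeomorph.symm_apply_apply]
    rfl
  rw [heq, Set.range_comp]
  rw [dense_iff_closure_eq, ← Homeomorph.image_closure, oY_dense.closure_eq,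
    Set.image_univ, Homeomorph.range_coe]

theorem FX_discontinuous (p : Ultrafilter ℕ) (hp : (p : Filter ℕ) ≤ Filter.cofinite)
    (g : (Set.Iic (omega0 ^ (3 : Ordinal))) → (Set.Iic (omega0 ^ (3 : Ordinal))))
    (hg : ∀ x, Filter.Tendsto (fun n : ℕ => FX^[n] x) (p : Filter ℕ) (nhds (g x))) :
    ¬ Continuous g := by
  intro hcont
  have hgY : ∀ y : Y, Filter.Tendsto (fun n : ℕ => fY^[n] y) (p : Filter ℕ)
      (nhds (φ.symm (g (φ y)))) := by
    intro y
    have h1 := hg (φ y)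
    have h2 := (φ.symm.continuous.tendsto _).comp h1
    have heq : (φ.symm ∘ fun n : ℕ => FX^[n] (φ y)) = fun n : ℕ => fY^[n] y := by
      funext n
      show φ.symm (FX^[n] (φ y)) = _
      rw [FX_iter, Homeomorph.symm_apply_apply, Homeomorph.symm_apply_apply]
    rw [heq] at h2
    exact h2
  have := main_Y p hp (⇑φ.symm ∘ g ∘ ⇑φ) hgY
  exact this (φ.symm.continuous.comp (hcont.comp φ.continuous))

end Ex44

open Ordinal Filter in
/-- Example 4.4: There is a continuous function `f` on `ω³ + 1` (realized as
`Iic (ω³)` with the order topology) having a point with dense orbit, such that for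
every free ultrafilter `p` on `ℕ` the `p`-iterate `f^p` is discontinuous. -/
theorem exists_dense_orbit_all_p_iterates_discontinuous :
    ∃ f : Set.Iic (omega0 ^ (3 : Ordinal)) → Set.Iic (omega0 ^ (3 : Ordinal)),
      Continuous f ∧
      (∃ w : Set.Iic (omega0 ^ (3 : Ordinal)),
        Dense (Set.range fun n : ℕ => f^[n] w)) ∧
      ∀ p : Ultrafilter ℕ, (p : Filter ℕ) ≤ Filter.cofinite →
        ∀ g : Set.Iic (omega0 ^ (3 : Ordinal)) → Set.Iic (omega0 ^ (3 : Ordinal)),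
          (∀ x, Tendsto (fun n : ℕ => f^[n] x) (p : Filter ℕ) (nhds (g x))) →
          ¬ Continuous g := by
  exact ⟨Ex44.FX, Ex44.FX_continuous, ⟨Ex44.φ (Ex44.mk 0 0 0), Ex44.FX_dense_orbit⟩,
    Ex44.FX_discontinuous⟩
end
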